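/- For β > 2 and 2 ≤ p < β, the integral ∫_e^∞ x^{p-1-β} (ln x)^{-1} dx is bounded above by C·(1 + |ln(β - p)|) for some constant C depending only on β, and bounded below by c·|ln(β - p)| for p sufficiently close to β. -/

import Mathlib

open MeasureTheory Real Set

private lemma he1' : (1:ℝ) < Real.exp 1 := by nlinarith [Real.add_one_le_exp (1:ℝ)]

private lemma log_gt_one' {x : ℝ} (hx : Real.exp 1 < x) : 1 < Real.log x := by
  have := Real.log_lt_log (Real.exp_pos 1) hx
  rwa [Real.log_exp] at this

private lemma contOn' (a : ℝ) (s : Set ℝ) (hs : ∀ x ∈ s, Real.exp 1 ≤ x) :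
    ContinuousOn (fun x => x ^ (-1 - a) * (Real.log x)⁻¹) s := by
  have hx1 : ∀ x ∈ s, (1:ℝ) < x := fun x hx => lt_of_lt_of_le he1' (hs x hx)
  apply ContinuousOn.mul
  · exact ContinuousOn.rpow_const continuousOn_id fun x hx => Or.inl (by nlinarith [hx1 x hx])
  · apply ContinuousOn.inv₀
    · exact Real.continuousOn_log.mono fun x hx => by
        simp; nlinarith [hx1 x hx]
    · intro x hx
      have : 0 < Real.log x := Real.log_pos (hx1 x hx)
      linarith

private lemma integrableOn_aux' (a : ℝ) (ha : 0 < a) {c : ℝ} (hc : Real.exp 1 ≤ c) :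
    IntegrableOn (fun x => x ^ (-1 - a) * (Real.log x)⁻¹) (Set.Ioi c) := by
  have hc0 : 0 < c := lt_of_lt_of_le (Real.exp_pos 1) hc
  have hg : IntegrableOn (fun x : ℝ => x ^ (-1 - a)) (Set.Ioi c) :=
    integrableOn_Ioi_rpow_of_lt (by linarith) hc0
  refine hg.mono' ?_ ?_
  · exact (contOn' a _ fun x hx => le_trans hc (le_of_lt hx)).aestronglyMeasurable
      measurableSet_Ioi
  · filter_upwards [ae_restrict_mem measurableSet_Ioi] with x hx
    have hxe : Real.exp 1 < x := lt_of_le_of_lt hc hx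
    have hlog : 1 < Real.log x := log_gt_one' hxe
    have hx0 : (0:ℝ) < x := lt_trans (Real.exp_pos 1) hxe
    have h1 : (0:ℝ) ≤ x ^ (-1 - a) := Real.rpow_nonneg hx0.le _
    rw [norm_mul, Real.norm_rpow_of_nonneg hx0.le, Real.norm_eq_abs, abs_of_pos hx0,
      Real.norm_eq_abs, abs_of_pos (by positivity : (0:ℝ) < (Real.log x)⁻¹)]
    exact mul_le_of_le_one_right h1 (inv_le_one_of_one_le₀ hlog.le)

private lemma ftc_loglog' {M : ℝ} (hM : Real.exp 1 ≤ M) :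
    ∫ x in Set.Ioc (Real.exp 1) M, (x * Real.log x)⁻¹ = Real.log (Real.log M) := by
  have key : ∀ x ∈ Set.uIcc (Real.exp 1) M,
      HasDerivAt (fun y => Real.log (Real.log y)) ((x * Real.log x)⁻¹) x := by
    intro x hx
    rw [Set.uIcc_of_le hM] at hx
    have hx1 : (1:ℝ) < x := lt_of_lt_of_le he1' hx.1
    have hx0 : x ≠ 0 := by linarith
    have hlx : Real.log x ≠ 0 := ne_of_gt (Real.log_pos hx1)
    have := (Real.hasDerivAt_log hlx).comp x (Real.hasDerivAt_log hx0)
    have e : (x * Real.log x)⁻¹ = (Real.log x)⁻¹ * x⁻¹ := by rw [mul_inv]; ring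
    rw [e]; exact this
  have hcont : ContinuousOn (fun x : ℝ => (x * Real.log x)⁻¹) (Set.uIcc (Real.exp 1) M) := by
    apply ContinuousOn.inv₀
    · exact (continuousOn_id.mul (Real.continuousOn_log.mono fun x hx => by
        rw [Set.uIcc_of_le hM] at hx; simp; nlinarith [hx.1, he1']))
    · intro x hx
      rw [Set.uIcc_of_le hM] at hx
      have hx1 : (1:ℝ) < x := lt_of_lt_of_le he1' hx.1
      have hl := Real.log_pos hx1
      have hx0 : (0:ℝ) < x := by linarith
      positivity
  have h := intervalIntegral.integral_eq_sub_of_hasDerivAt key (hcont.intervalIntegrable)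
  rw [intervalIntegral.integral_of_le hM] at h
  rw [h, Real.log_exp, Real.log_one, sub_zero]

private lemma int_xlogx' {M : ℝ} :
    IntegrableOn (fun x : ℝ => (x * Real.log x)⁻¹) (Set.Ioc (Real.exp 1) M) := by
  have hcont : ContinuousOn (fun x : ℝ => (x * Real.log x)⁻¹) (Set.Icc (Real.exp 1) M) := by
    apply ContinuousOn.inv₀
    · exact continuousOn_id.mul (Real.continuousOn_log.mono fun x hx => by
        simp; nlinarith [hx.1, he1'])
    · intro x hx
      have hx1 : (1:ℝ) < x := lt_of_lt_of_le he1' hx.1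
      have hl := Real.log_pos hx1
      have hx0 : (0:ℝ) < x := by linarith
      positivity
  exact (hcont.integrableOn_Icc).mono_set Set.Ioc_subset_Icc_self

private lemma upper_big' (a : ℝ) (ha : 1 ≤ a) :
    ∫ x in Set.Ioi (Real.exp 1), x ^ (-1 - a) * (Real.log x)⁻¹ ≤ 1 + |Real.log a| := by
  have ha0 : (0:ℝ) < a := by linarith
  have hint := integrableOn_aux' a ha0 (le_refl _)
  have hg : IntegrableOn (fun x : ℝ => x ^ (-1 - a)) (Set.Ioi (Real.exp 1)) :=
    integrableOn_Ioi_rpow_of_lt (by linarith) (Real.exp_pos 1)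
  have h1 : ∫ x in Set.Ioi (Real.exp 1), x ^ (-1 - a) * (Real.log x)⁻¹
      ≤ ∫ x in Set.Ioi (Real.exp 1), x ^ (-1 - a) := by
    apply setIntegral_mono_on hint hg measurableSet_Ioi
    intro x hx
    have hlog : 1 < Real.log x := log_gt_one' hx
    have hx0 : (0:ℝ) ≤ x ^ (-1 - a) := Real.rpow_nonneg (by linarith [he1'.trans hx]) _
    exact mul_le_of_le_one_right hx0 (inv_le_one_of_one_le₀ hlog.le)
  have h2 : ∫ x in Set.Ioi (Real.exp 1), x ^ (-1 - a) = (Real.exp 1) ^ (-a) / a := by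
    rw [integral_Ioi_rpow_of_lt (by linarith) (Real.exp_pos 1)]
    have h : (-1 - a + 1) = -a := by ring
    rw [h]; field_simp
  have h3 : (Real.exp 1) ^ (-a) / a ≤ 1 := by
    have hb : (Real.exp 1) ^ (-a) ≤ 1 :=
      Real.rpow_le_one_of_one_le_of_nonpos he1'.le (by linarith)
    calc (Real.exp 1) ^ (-a) / a ≤ 1 / a := div_le_div_of_nonneg_right hb ha0.le
      _ ≤ 1 := by rw [div_le_one ha0]; exact ha
  have h4 : (0:ℝ) ≤ |Real.log a| := abs_nonneg _
  linarith

private lemma upper_small' (a : ℝ) (ha : 0 < a) (ha1 : a < 1) :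
    ∫ x in Set.Ioi (Real.exp 1), x ^ (-1 - a) * (Real.log x)⁻¹ ≤ 1 + |Real.log a| := by
  set M := Real.exp (1/a) with hMdef
  have h1a : (1:ℝ) ≤ 1/a := by rw [le_div_iff₀ ha]; linarith
  have hM : Real.exp 1 ≤ M := Real.exp_le_exp.2 h1a
  have hM0 : (0:ℝ) < M := Real.exp_pos _
  have hMa : M ^ (-a) = Real.exp (-1) := by
    rw [hMdef, ← Real.exp_mul]
    congr 1; field_simp
  have hlogM : Real.log M = 1/a := by rw [hMdef, Real.log_exp]
  have hsplit : Set.Ioc (Real.exp 1) M ∪ Set.Ioi M = Set.Ioi (Real.exp 1) :=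
    Set.Ioc_union_Ioi_eq_Ioi hM
  have hint := integrableOn_aux' a ha (le_refl _)
  have hint1 : IntegrableOn (fun x => x ^ (-1 - a) * (Real.log x)⁻¹)
      (Set.Ioc (Real.exp 1) M) := hint.mono_set Set.Ioc_subset_Ioi_self
  have hint2 : IntegrableOn (fun x => x ^ (-1 - a) * (Real.log x)⁻¹) (Set.Ioi M) :=
    integrableOn_aux' a ha hM
  have hdisj : Disjoint (Set.Ioc (Real.exp 1) M) (Set.Ioi M) := by
    apply Set.disjoint_left.2
    intro x hx hx'
    exact absurd hx.2 (not_le.2 hx')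
  have heq : ∫ x in Set.Ioi (Real.exp 1), x ^ (-1 - a) * (Real.log x)⁻¹
      = (∫ x in Set.Ioc (Real.exp 1) M, x ^ (-1 - a) * (Real.log x)⁻¹)
        + ∫ x in Set.Ioi M, x ^ (-1 - a) * (Real.log x)⁻¹ := by
    rw [← hsplit]
    exact setIntegral_union hdisj measurableSet_Ioi hint1 hint2
  -- part 1
  have part1 : ∫ x in Set.Ioc (Real.exp 1) M, x ^ (-1 - a) * (Real.log x)⁻¹
      ≤ -Real.log a := by
    have hmono : ∫ x in Set.Ioc (Real.exp 1) M, x ^ (-1 - a) * (Real.log x)⁻¹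
        ≤ ∫ x in Set.Ioc (Real.exp 1) M, (x * Real.log x)⁻¹ := by
      apply setIntegral_mono_on hint1 int_xlogx' measurableSet_Ioc
      intro x hx
      have hx1 : (1:ℝ) < x := lt_of_lt_of_le he1' hx.1.le
      have hx0 : (0:ℝ) < x := by linarith
      have hlog : 0 < Real.log x := Real.log_pos hx1
      rw [mul_inv]
      apply mul_le_mul_of_nonneg_right ?_ (by positivity)
      calc x ^ (-1 - a) ≤ x ^ (-1 : ℝ) :=
            Real.rpow_le_rpow_of_exponent_le hx1.le (by linarith)
        _ = x⁻¹ := Real.rpow_neg_one x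
    rw [ftc_loglog' hM, hlogM] at hmono
    rwa [Real.log_div one_ne_zero (ne_of_gt ha), Real.log_one, zero_sub] at hmono
  -- part 2
  have part2 : ∫ x in Set.Ioi M, x ^ (-1 - a) * (Real.log x)⁻¹ ≤ 1 := by
    have hg : IntegrableOn (fun x : ℝ => a * x ^ (-1 - a)) (Set.Ioi M) :=
      (integrableOn_Ioi_rpow_of_lt (by linarith) hM0).const_mul a
    have hmono : ∫ x in Set.Ioi M, x ^ (-1 - a) * (Real.log x)⁻¹
        ≤ ∫ x in Set.Ioi M, a * x ^ (-1 - a) := by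
      apply setIntegral_mono_on hint2 hg measurableSet_Ioi
      intro x hx
      have hxM : M < x := hx
      have hx1 : (1:ℝ) < x := lt_of_lt_of_le he1' (le_of_lt (lt_of_le_of_lt hM hxM))
      have hx0 : (0:ℝ) < x := by linarith
      have hlog : 1/a ≤ Real.log x := by
        rw [← hlogM]
        exact (Real.log_le_log hM0 hxM.le)
      have hlogpos : 0 < Real.log x := lt_of_lt_of_le (by positivity) hlog
      have hinv : (Real.log x)⁻¹ ≤ a := by
        rw [inv_le_comm₀ hlogpos ha, ← one_div]
        exact hlog
      rw [mul_comm]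
      exact mul_le_mul_of_nonneg_right hinv (Real.rpow_nonneg hx0.le _)
    have hcalc : ∫ x in Set.Ioi M, a * x ^ (-1 - a) = Real.exp (-1) := by
      rw [integral_const_mul, integral_Ioi_rpow_of_lt (by linarith) hM0]
      have h : (-1 - a + 1) = -a := by ring
      rw [h, hMa]
      field_simp
    rw [hcalc] at hmono
    refine hmono.trans ?_
    have h := Real.exp_le_exp.2 (by norm_num : (-1:ℝ) ≤ 0)
    rwa [Real.exp_zero] at h
  have habs : |Real.log a| = -Real.log a :=
    abs_of_neg (Real.log_neg ha ha1)
  rw [heq, habs]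
  linarith

private lemma lower' (a : ℝ) (ha : 0 < a) (ha1 : a < 1) :
    Real.exp (-1) * |Real.log a|
      ≤ ∫ x in Set.Ioi (Real.exp 1), x ^ (-1 - a) * (Real.log x)⁻¹ := by
  set M := Real.exp (1/a) with hMdef
  have h1a : (1:ℝ) ≤ 1/a := by rw [le_div_iff₀ ha]; linarith
  have hM : Real.exp 1 ≤ M := Real.exp_le_exp.2 h1a
  have hM0 : (0:ℝ) < M := Real.exp_pos _
  have hMa : M ^ (-a) = Real.exp (-1) := by
    rw [hMdef, ← Real.exp_mul]; congr 1; field_simp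
  have hlogM : Real.log M = 1/a := by rw [hMdef, Real.log_exp]
  have hint := integrableOn_aux' a ha (le_refl (Real.exp 1))
  have hint1 : IntegrableOn (fun x => x ^ (-1 - a) * (Real.log x)⁻¹)
      (Set.Ioc (Real.exp 1) M) := hint.mono_set Set.Ioc_subset_Ioi_self
  -- pointwise lower bound on Ioc
  have step1 : ∫ x in Set.Ioc (Real.exp 1) M, Real.exp (-1) * (x * Real.log x)⁻¹
      ≤ ∫ x in Set.Ioc (Real.exp 1) M, x ^ (-1 - a) * (Real.log x)⁻¹ := by
    apply setIntegral_mono_on (int_xlogx'.const_mul _) hint1 measurableSet_Ioc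
    intro x hx
    have hx1 : (1:ℝ) < x := lt_of_lt_of_le he1' hx.1.le
    have hx0 : (0:ℝ) < x := by linarith
    have hlog : 0 < Real.log x := Real.log_pos hx1
    have hxa : x ^ (-a) ≥ Real.exp (-1) := by
      rw [← hMa]
      rw [Real.rpow_neg hx0.le, Real.rpow_neg hM0.le]
      apply inv_anti₀ (Real.rpow_pos_of_pos hx0 a)
      exact Real.rpow_le_rpow hx0.le hx.2 ha.le
    have hsplitpow : x ^ (-1 - a) = x ^ (-a) * x⁻¹ := by
      rw [← Real.rpow_neg_one x, ← Real.rpow_add hx0]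
      congr 1; ring
    rw [hsplitpow, mul_inv, mul_assoc]
    apply mul_le_mul_of_nonneg_right hxa (by positivity)
  have step2 : ∫ x in Set.Ioc (Real.exp 1) M, Real.exp (-1) * (x * Real.log x)⁻¹
      = Real.exp (-1) * (-Real.log a) := by
    rw [integral_const_mul, ftc_loglog' hM, hlogM,
      Real.log_div one_ne_zero (ne_of_gt ha), Real.log_one, zero_sub]
  have step3 : ∫ x in Set.Ioc (Real.exp 1) M, x ^ (-1 - a) * (Real.log x)⁻¹
      ≤ ∫ x in Set.Ioi (Real.exp 1), x ^ (-1 - a) * (Real.log x)⁻¹ := by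
    apply setIntegral_mono_set hint ?_ (HasSubset.Subset.eventuallyLE Set.Ioc_subset_Ioi_self)
    filter_upwards [ae_restrict_mem measurableSet_Ioi] with x hx
    have hx1 : (1:ℝ) < x := lt_trans he1' hx
    have hlog : 0 < Real.log x := Real.log_pos hx1
    positivity
  have habs : |Real.log a| = -Real.log a := abs_of_neg (Real.log_neg ha ha1)
  rw [habs]
  linarith [step1, step3, step2.symm.le]

theorem stmt_2 (β : ℝ) (hβ : 2 < β) :
    (∃ C > (0 : ℝ), ∀ p : ℝ, 2 ≤ p → p < β →
      ∫ x in Set.Ioi (Real.exp 1), x ^ (p - 1 - β) * (Real.log x)⁻¹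
        ≤ C * (1 + |Real.log (β - p)|)) ∧
    (∃ c > (0 : ℝ), ∃ δ > (0 : ℝ), ∀ p : ℝ, 2 ≤ p → p < β → β - p < δ →
      c * |Real.log (β - p)|
        ≤ ∫ x in Set.Ioi (Real.exp 1), x ^ (p - 1 - β) * (Real.log x)⁻¹) := by
  constructor
  · refine ⟨1, one_pos, fun p hp hpβ => ?_⟩
    have ha : 0 < β - p := by linarith
    have hexp : p - 1 - β = -1 - (β - p) := by ring
    rw [hexp, one_mul]
    rcases le_or_gt 1 (β - p) with h | h
    · exact upper_big' _ h
    · exact upper_small' _ ha h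
  · refine ⟨Real.exp (-1), Real.exp_pos _, 1, one_pos, fun p hp hpβ hδ => ?_⟩
    have ha : 0 < β - p := by linarith
    have hexp : p - 1 - β = -1 - (β - p) := by ring
    rw [hexp]
    exact lower' _ ha hδ
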